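/- A priori bound on transition probabilities between Fermi projections for spin chains: Let H = Σ_{i=−L}^{L−1} Y_{i,i+1} be a self-adjoint operator on ℋ^(L) = ⊗_{i=−L}^{L} ℂ², where each Y_{i,i+1} is a self-adjoint local observable with support [i, i+1] and max_{i∈[−L,L−1]} ‖Y_{i,i+1}‖ ≤ θ < ∞. Then there exist constants m_F > 0 and C_F < ∞, depending only on θ and independent of L, such that for every local observable X and all energies E < E′: ‖ χ_{(−∞,E]}(H) · X · (1 − χ_{(−∞,E′]}(H)) ‖ ≤ C_F ‖X‖ e^{−(m_F/|𝒮_X|)(E′ − E)}. -/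

import Mathlib

open MeasureTheory
open scoped ENNReal Classical

noncomputable section

/-- Sites of the chain `[-L, L] ∩ ℤ`. -/
abbrev SiteIdx (L : ℕ) : Type := {i : ℤ // i ∈ Finset.Icc (-(L:ℤ)) (L:ℤ)}

/-- Spin configurations: `true` = spin down. -/
abbrev Cfg (L : ℕ) : Type := SiteIdx L → Bool

/-- The Hilbert space `ℋ^{(L)} = ⊗_{i=-L}^{L} ℂ²`, realized with the spin-configuration basis. -/
abbrev HSp (L : ℕ) : Type := EuclideanSpace ℂ (Cfg L)

/-- Operators on `ℋ^{(L)}`. -/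
abbrev Op (L : ℕ) : Type := HSp L →L[ℂ] HSp L

def spinDownAt (L : ℕ) (i : ℤ) (c : Cfg L) : Prop :=
  ∃ j : SiteIdx L, (j : ℤ) = i ∧ c j = true

def flipAt (L : ℕ) (i : ℤ) (c : Cfg L) : Cfg L :=
  fun j => if (j : ℤ) = i then !(c j) else c j

/-- The Pauli matrix `σ^x_i`. -/
def sigX (L : ℕ) (i : ℤ) : Matrix (Cfg L) (Cfg L) ℂ :=
  Matrix.of fun c c' => if c = flipAt L i c' then 1 else 0

/-- The Pauli matrix `σ^y_i`. -/
def sigY (L : ℕ) (i : ℤ) : Matrix (Cfg L) (Cfg L) ℂ :=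
  Matrix.of fun c c' =>
    if c = flipAt L i c' then (if spinDownAt L i c' then -Complex.I else Complex.I) else 0

/-- The Pauli matrix `σ^z_i`. -/
def sigZ (L : ℕ) (i : ℤ) : Matrix (Cfg L) (Cfg L) ℂ :=
  Matrix.diagonal fun c => if spinDownAt L i c then -1 else 1

/-- The local number operator `𝒩_i = (1 - σ^z_i)/2`. -/
def numM (L : ℕ) (i : ℤ) : Matrix (Cfg L) (Cfg L) ℂ :=
  Matrix.diagonal fun c => if spinDownAt L i c then 1 else 0

def toOp (L : ℕ) (M : Matrix (Cfg L) (Cfg L) ℂ) : Op L :=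
  Matrix.toEuclideanCLM (𝕜 := ℂ) M

def toMat (L : ℕ) (A : Op L) : Matrix (Cfg L) (Cfg L) ℂ :=
  (Matrix.toEuclideanCLM (𝕜 := ℂ) (n := Cfg L)).symm A

/-- The local next-neighbour Hamiltonian `h_{i,i+1}`. -/
def hLoc (Δ : ℝ) (L : ℕ) (i : ℤ) : Matrix (Cfg L) (Cfg L) ℂ :=
  (4:ℂ)⁻¹ • ((1 : Matrix (Cfg L) (Cfg L) ℂ) - sigZ L i * sigZ L (i+1))
  - (((4*Δ)⁻¹ : ℝ) : ℂ) • (sigX L i * sigX L (i+1) + sigY L i * sigY L (i+1))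

/-- The XXZ Hamiltonian `H_ω^{(L)}` with droplet boundary term. -/
def ham (Δ lam β : ℝ) (L : ℕ) (ω : ℤ → ℝ) : Op L :=
  toOp L
    ((∑ i ∈ Finset.Icc (-(L:ℤ)) ((L:ℤ)-1), hLoc Δ L i)
     + (lam : ℂ) • (∑ i ∈ Finset.Icc (-(L:ℤ)) (L:ℤ), ((ω i : ℝ) : ℂ) • numM L i)
     + (β : ℂ) • (numM L (-(L:ℤ)) + numM L (L:ℤ)))

def numOp (L : ℕ) (i : ℤ) : Op L := toOp L (numM L i)

def sigXOp (L : ℕ) (i : ℤ) : Op L := toOp L (sigX L i)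

/-- `g(A)` for a bounded Borel `g : ℝ → ℂ` (finite dimensions, via continuous functional
calculus; the spectrum is finite, so every function is continuous on it). -/
def opFun (L : ℕ) (g : ℝ → ℂ) (A : Op L) : Op L := cfc (fun z : ℂ => g z.re) A

/-- `f(A)` for real-valued `f`. -/
def opFunR (L : ℕ) (f : ℝ → ℝ) (A : Op L) : Op L := cfc f A

/-- The spectral projection `P_B = χ_B(A)`. -/
def specProj (L : ℕ) (B : Set ℝ) (A : Op L) : Op L :=
  opFun L (fun x => if x ∈ B then 1 else 0) A

/-- `e^{itA}`. -/
def expIt (L : ℕ) (t : ℝ) (A : Op L) : Op L :=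
  opFun L (fun x => Complex.exp (Complex.I * t * x)) A

/-- Heisenberg evolution `e^{itA} X e^{-itA}`. -/
def heis (L : ℕ) (t : ℝ) (A X : Op L) : Op L := expIt L t A * X * expIt L (-t) A

/-- `X_B = P_B X P_B`. -/
def wind (L : ℕ) (B : Set ℝ) (A X : Op L) : Op L := specProj L B A * X * specProj L B A

/-- The trace norm `‖T‖₁`. -/
def traceNorm (L : ℕ) (T : Op L) : ℝ :=
  (Matrix.trace (toMat L (cfc Real.sqrt (star T * T)))).re

/-- The squared Hilbert–Schmidt norm `‖T‖₂²`. -/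
def hsNormSq (L : ℕ) (T : Op L) : ℝ := (Matrix.trace (toMat L (star T * T))).re

def opTrace (L : ℕ) (T : Op L) : ℂ := Matrix.trace (toMat L T)

/-- A matrix acts only on the sites in `S` (it is of the form `X_S ⊗ Id`). -/
def MatSupportedOn (L : ℕ) (M : Matrix (Cfg L) (Cfg L) ℂ) (S : Set ℤ) : Prop :=
  (∀ c c' : Cfg L, (∃ j : SiteIdx L, ((j:ℤ) ∉ S ∧ c j ≠ c' j)) → M c c' = 0) ∧
  (∀ c c' d d' : Cfg L,
     (∀ j : SiteIdx L, (j:ℤ) ∈ S → c j = d j ∧ c' j = d' j) →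
     (∀ j : SiteIdx L, (j:ℤ) ∉ S → c j = c' j ∧ d j = d' j) →
     M c c' = M d d')

/-- Local observable with support `[s, r] ⊂ [-L, L]`. -/
def IsLocalObs (L : ℕ) (X : Op L) (s r : ℤ) : Prop :=
  -(L:ℤ) ≤ s ∧ s ≤ r ∧ r ≤ (L:ℤ) ∧ MatSupportedOn L (toMat L X) (Set.Icc s r)

/-- Distance of the supports `[sX, rX]` and `[sY, rY]`. -/
def suppDist (sX rX sY rY : ℤ) : ℤ := max 0 (max (sY - rX) (sX - rY))

/-- `P_+^{(S)}`: all spins in `S` up. -/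
def pPlus (L : ℕ) (S : Set ℤ) : Op L :=
  toOp L (Matrix.diagonal fun c => if ∀ j : SiteIdx L, (j:ℤ) ∈ S → c j = false then 1 else 0)

def pMinus (L : ℕ) (S : Set ℤ) : Op L := 1 - pPlus L S

/-- Borel functions dominated by the indicator function of `J`. -/
def GJ (J : Set ℝ) : Set (ℝ → ℂ) :=
  {g | Measurable g ∧ ∀ x : ℝ, ‖g x‖ ≤ Set.indicator J (fun _ => (1:ℝ)) x}

/-- Property DL (droplet localization) in the interval `I = [1 - 1/Δ, Θ₁]`,
with constants `CDL` and `m`. -/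
def PropertyDL (Δ lam β Θ₁ CDL m : ℝ) (ℙ : Measure (ℤ → ℝ)) : Prop :=
  ∀ L : ℕ, ∀ i j : ℤ, i ∈ Finset.Icc (-(L:ℤ)) (L:ℤ) → j ∈ Finset.Icc (-(L:ℤ)) (L:ℤ) →
    (∫⁻ ω, ⨆ g ∈ GJ (Set.Icc (1 - 1/Δ) Θ₁),
        ENNReal.ofReal (traceNorm L (numOp L i * opFun L g (ham Δ lam β L ω) * numOp L j)) ∂ℙ)
      ≤ ENNReal.ofReal (CDL * Real.exp (-m * ((|i - j| : ℤ) : ℝ)))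

/-- Disordered XXZ spin chain in the Ising phase: `Δ > 1`, `λ > 0`,
`β ≥ (1/2)(1 - 1/Δ)`, and `ω` distributed according to a shift-ergodic probability
measure on `[0,1]^ℤ` with identical single-site marginals `μ` such that
`{0,1} ⊂ supp μ ⊂ [0,1]` and `μ({0}) = 0`. -/
def IsDisorderedXXZ (Δ lam β : ℝ) (ℙ : Measure (ℤ → ℝ)) (μ : Measure ℝ) : Prop :=
  1 < Δ ∧ 0 < lam ∧ (1/2) * (1 - 1/Δ) ≤ β ∧
  IsProbabilityMeasure ℙ ∧ IsProbabilityMeasure μ ∧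
  (∀ᵐ ω ∂ℙ, ∀ i : ℤ, ω i ∈ Set.Icc (0:ℝ) 1) ∧
  Ergodic (fun (ω : ℤ → ℝ) (i : ℤ) => ω (i+1)) ℙ ∧
  (∀ i : ℤ, ℙ.map (fun ω => ω i) = μ) ∧
  μ {0} = 0 ∧ μ (Set.Icc (0:ℝ) 1)ᶜ = 0 ∧
  (∀ ε : ℝ, 0 < ε → 0 < μ (Set.Ioo (-ε) ε) ∧ 0 < μ (Set.Ioo (1-ε) (1+ε)))

/-- Random XXZ spin chain: in addition the `ω_i` are independent. -/
def IsRandomXXZ (Δ lam β : ℝ) (ℙ : Measure (ℤ → ℝ)) (μ : Measure ℝ) : Prop :=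
  IsDisorderedXXZ Δ lam β ℙ μ ∧
  ProbabilityTheory.iIndepFun
    (fun (i : ℤ) (ω : ℤ → ℝ) => ω i) ℙ

/-- The interval `I = [Θ₀, Θ₁]`. -/
def ivI (Δ Θ₁ : ℝ) : Set ℝ := Set.Icc (1 - 1/Δ) Θ₁

/-- The interval `I₀ = [0, Θ₁]`. -/
def ivI0 (Θ₁ : ℝ) : Set ℝ := Set.Icc (0:ℝ) Θ₁

/-- The commutator. -/
def commut (L : ℕ) (A B : Op L) : Op L := A * B - B * A

/-- The Fourier transform `f̂(t) = (2π)⁻¹ ∫ e^{itx} f(x) dx`. -/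
def fhat (f : ℝ → ℝ) (t : ℝ) : ℂ :=
  (((2 * Real.pi)⁻¹ : ℝ) : ℂ) * ∫ x : ℝ, Complex.exp (Complex.I * t * x) * (f x : ℂ)

end



set_option maxHeartbeats 1000000
noncomputable section AuxAll
open NormedSpace

namespace Aux

variable {L : ℕ} {M N : Matrix (Cfg L) (Cfg L) ℂ} {S S' T : Set ℤ}

lemma matSupp_mono (h : S ⊆ S') (hM : MatSupportedOn L M S) : MatSupportedOn L M S' := by
  constructor
  · rintro c c' ⟨j, hj, hcc⟩
    exact hM.1 c c' ⟨j, fun hS => hj (h hS), hcc⟩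
  · intro c c' d d' h1 h2
    by_cases hcc : ∀ j : SiteIdx L, (j:ℤ) ∉ S → c j = c' j
    · have hdd : ∀ j : SiteIdx L, (j:ℤ) ∉ S → d j = d' j := by
        intro j hj
        by_cases hj' : (j:ℤ) ∈ S'
        · rw [← (h1 j hj').1, ← (h1 j hj').2]; exact hcc j hj
        · exact (h2 j hj').2
      exact hM.2 c c' d d' (fun j hj => h1 j (h hj)) (fun j hj => ⟨hcc j hj, hdd j hj⟩)
    · push_neg at hcc
      obtain ⟨j, hj, hne⟩ := hcc
      by_cases hj' : (j:ℤ) ∈ S'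
      · rw [hM.1 c c' ⟨j, hj, hne⟩, hM.1 d d' ⟨j, hj, ?_⟩]
        rw [← (h1 j hj').1, ← (h1 j hj').2]; exact hne
      · exact absurd (h2 j hj').1 hne

lemma matSupp_add (hM : MatSupportedOn L M S) (hN : MatSupportedOn L N S) :
    MatSupportedOn L (M + N) S := by
  refine ⟨fun c c' h => ?_, fun c c' d d' h1 h2 => ?_⟩
  · simp [Matrix.add_apply, hM.1 c c' h, hN.1 c c' h]
  · simp [Matrix.add_apply, hM.2 c c' d d' h1 h2, hN.2 c c' d d' h1 h2]

lemma matSupp_zero : MatSupportedOn L (0 : Matrix (Cfg L) (Cfg L) ℂ) S := by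
  refine ⟨fun _ _ _ => rfl, fun _ _ _ _ _ _ => rfl⟩

lemma matSupp_smul (a : ℂ) (hM : MatSupportedOn L M S) : MatSupportedOn L (a • M) S := by
  refine ⟨fun c c' h => ?_, fun c c' d d' h1 h2 => ?_⟩
  · simp [Matrix.smul_apply, hM.1 c c' h]
  · simp [Matrix.smul_apply, hM.2 c c' d d' h1 h2]

lemma matSupp_neg (hM : MatSupportedOn L M S) : MatSupportedOn L (-M) S := by
  have := matSupp_smul (-1 : ℂ) hM; simpa using this

lemma matSupp_sub (hM : MatSupportedOn L M S) (hN : MatSupportedOn L N S) :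
    MatSupportedOn L (M - N) S := by
  have := matSupp_add hM (matSupp_neg hN); simpa [sub_eq_add_neg] using this

lemma matSupp_sum {ι : Type*} (s : Finset ι) (f : ι → Matrix (Cfg L) (Cfg L) ℂ)
    (hf : ∀ i ∈ s, MatSupportedOn L (f i) S) :
    MatSupportedOn L (∑ i ∈ s, f i) S := by
  classical
  induction s using Finset.induction with
  | empty => simpa using matSupp_zero
  | @insert a s' hx ih =>
    rw [Finset.sum_insert hx]
    exact matSupp_add (hf a (Finset.mem_insert_self a s'))
      (ih fun i hi => hf i (Finset.mem_insert_of_mem hi))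

/-- involution used to renumber configurations -/
private def flipCfg (L : ℕ) (S : Set ℤ) (c d : Cfg L) : Cfg L → Cfg L :=
  fun e j => if (j:ℤ) ∈ S then e j else xor (e j) (xor (c j) (d j))

private lemma xor_aux : ∀ x a b : Bool, xor x (xor a b) = b → x = a := by decide

private lemma flipCfg_invol (c d : Cfg L) : Function.Involutive (flipCfg L S c d) := by
  intro e; funext j
  simp only [flipCfg]
  by_cases h : (j:ℤ) ∈ S <;> simp [h, Bool.xor_assoc]

lemma matSupp_mul (hM : MatSupportedOn L M S) (hN : MatSupportedOn L N S) :
    MatSupportedOn L (M * N) S := by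
  constructor
  · rintro c c' ⟨j, hj, hcc⟩
    rw [Matrix.mul_apply]
    apply Finset.sum_eq_zero
    intro e _
    by_cases he : e j = c j
    · have : e j ≠ c' j := by rw [he]; exact hcc
      rw [hN.1 e c' ⟨j, hj, this⟩, mul_zero]
    · rw [hM.1 c e ⟨j, hj, fun h => he h.symm⟩, zero_mul]
  · intro c c' d d' h1 h2
    rw [Matrix.mul_apply, Matrix.mul_apply]
    rw [← Equiv.sum_comp ((flipCfg_invol (S := S) c d).toPerm) (fun e => M d e * N e d')]
    apply Finset.sum_congr rfl
    intro e _
    have hσ : ∀ j : SiteIdx L, (j:ℤ) ∈ S → (flipCfg L S c d e) j = e j := by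
      intro j hj; simp [flipCfg, Function.Involutive.toPerm, hj]
    have hσ' : ∀ j : SiteIdx L, (j:ℤ) ∉ S →
        (flipCfg L S c d e) j = xor (e j) (xor (c j) (d j)) := by
      intro j hj; simp [flipCfg, Function.Involutive.toPerm, hj]
    show M c e * N e c' = M d (flipCfg L S c d e) * N (flipCfg L S c d e) d'
    by_cases hec : ∀ j : SiteIdx L, (j:ℤ) ∉ S → e j = c j
    · have hed : ∀ j : SiteIdx L, (j:ℤ) ∉ S → (flipCfg L S c d e) j = d j := by
        intro j hj; rw [hσ' j hj, hec j hj]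
        cases c j <;> cases d j <;> rfl
      have e1 : M c e = M d (flipCfg L S c d e) := by
        apply hM.2
        · intro j hj; exact ⟨(h1 j hj).1, (hσ j hj).symm⟩
        · intro j hj; exact ⟨(hec j hj).symm, (hed j hj).symm⟩
      have e2 : N e c' = N (flipCfg L S c d e) d' := by
        apply hN.2
        · intro j hj; exact ⟨(hσ j hj).symm, (h1 j hj).2⟩
        · intro j hj
          refine ⟨(hec j hj).trans (h2 j hj).1, (hed j hj).trans (h2 j hj).2⟩
      rw [e1, e2]
    · push_neg at hec
      obtain ⟨j, hj, hne⟩ := hec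
      have h₁ : M c e = 0 := hM.1 c e ⟨j, hj, fun h => hne h.symm⟩
      have h₂ : M d (flipCfg L S c d e) = 0 := by
        apply hM.1
        refine ⟨j, hj, ?_⟩
        rw [hσ' j hj]
        intro h
        apply hne
        exact xor_aux (e j) (c j) (d j) h.symm
      rw [h₁, h₂, zero_mul, zero_mul]

lemma matSupp_comm_disjoint (hM : MatSupportedOn L M S) (hN : MatSupportedOn L N T)
    (hST : Disjoint S T) : M * N = N * M := by
  have hST' : ∀ x : ℤ, x ∈ S → x ∉ T := fun x hx hx' => (hST.le_bot ⟨hx, hx'⟩ : x ∈ (⊥:Set ℤ))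
  ext c c'
  rw [Matrix.mul_apply, Matrix.mul_apply]
  by_cases hcc : ∀ j : SiteIdx L, (j:ℤ) ∉ S → (j:ℤ) ∉ T → c j = c' j
  · -- sums reduce to single terms
    set d₀ : Cfg L := fun j => if (j:ℤ) ∈ S then c' j else c j with hd₀
    set d₁ : Cfg L := fun j => if (j:ℤ) ∈ T then c' j else c j with hd₁
    rw [Finset.sum_eq_single d₀, Finset.sum_eq_single d₁]
    · -- M c d₀ * N d₀ c' = N c d₁ * M d₁ c'
      have e1 : M c d₀ = M d₁ c' := by
        apply hM.2
        · intro j hj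
          constructor
          · simp [hd₁, hST' _ hj]
          · simp [hd₀, hj]
        · intro j hj
          constructor
          · simp [hd₀, hj]
          · by_cases hjT : (j:ℤ) ∈ T
            · simp [hd₁, hjT]
            · simp only [hd₁, if_neg hjT]; exact hcc j hj hjT
      have e2 : N d₀ c' = N c d₁ := by
        apply hN.2
        · intro j hj
          have hjS : (j:ℤ) ∉ S := fun h => hST' _ h hj
          constructor
          · simp [hd₀, hjS]
          · simp [hd₁, hj]
        · intro j hj
          constructor
          · by_cases hjS : (j:ℤ) ∈ S
            · simp [hd₀, hjS]
            · simp only [hd₀, if_neg hjS]; exact hcc j hjS hj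
          · simp [hd₁, hj]
      rw [e1, e2, mul_comm (N c d₁)]
    · -- other terms in ∑ N c e * M e c' vanish
      intro e _ hne
      have : ∃ j : SiteIdx L, e j ≠ d₁ j := by
        by_contra h; push_neg at h; exact hne (funext h)
      obtain ⟨j, hj⟩ := this
      by_cases hjT : (j:ℤ) ∈ T
      · have : e j ≠ c' j := by simpa [hd₁, hjT] using hj
        rw [hM.1 e c' ⟨j, fun h => hST' _ h hjT, this⟩, mul_zero]
      · have : e j ≠ c j := by simpa [hd₁, hjT] using hj
        rw [hN.1 c e ⟨j, hjT, fun h => this h.symm⟩, zero_mul]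
    · intro h; exact absurd (Finset.mem_univ d₁) h
    · -- other terms in ∑ M c e * N e c' vanish
      intro e _ hne
      have : ∃ j : SiteIdx L, e j ≠ d₀ j := by
        by_contra h; push_neg at h; exact hne (funext h)
      obtain ⟨j, hj⟩ := this
      by_cases hjS : (j:ℤ) ∈ S
      · have : e j ≠ c' j := by simpa [hd₀, hjS] using hj
        rw [hN.1 e c' ⟨j, hST' _ hjS, this⟩, mul_zero]
      · have : e j ≠ c j := by simpa [hd₀, hjS] using hj
        rw [hM.1 c e ⟨j, hjS, fun h => this h.symm⟩, zero_mul]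
    · intro h; exact absurd (Finset.mem_univ d₀) h
  · -- both sides vanish
    push_neg at hcc
    obtain ⟨j, hjS, hjT, hne⟩ := hcc
    rw [Finset.sum_eq_zero, Finset.sum_eq_zero]
    · intro e _
      by_cases he : e j = c j
      · have : e j ≠ c' j := by rw [he]; exact hne
        rw [hM.1 e c' ⟨j, hjS, this⟩, mul_zero]
      · rw [hN.1 c e ⟨j, hjT, fun h => he h.symm⟩, zero_mul]
    · intro e _
      by_cases he : e j = c j
      · have : e j ≠ c' j := by rw [he]; exact hne
        rw [hN.1 e c' ⟨j, hjT, this⟩, mul_zero]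
      · rw [hM.1 c e ⟨j, hjS, fun h => he h.symm⟩, zero_mul]

end Aux

namespace Aux2
variable {A : Type*} [NormedRing A] [NormedAlgebra ℂ A] [CompleteSpace A]

/-- iterated commutator `ad_B(Z) = Z*B - B*Z` -/
def adB (B : A) (Z : A) : A := Z * B - B * Z

lemma ad_pow (B X : A) : ∀ n : ℕ, (adB B)^[n] X
    = ∑ i ∈ Finset.range (n+1), ((-1)^i * (n.choose i) : ℂ) • (B^i * X * B^(n-i)) := by
  intro n
  induction n with
  | zero => simp [adB]
  | succ n ih =>
    rw [Function.iterate_succ_apply', ih]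
    have expand : adB B (∑ i ∈ Finset.range (n+1), ((-1)^i * (n.choose i) : ℂ) • (B^i * X * B^(n-i)))
      = (∑ i ∈ Finset.range (n+1), ((-1)^i * (n.choose i) : ℂ) • (B^i * X * B^(n-i+1)))
        - (∑ i ∈ Finset.range (n+1), ((-1)^i * (n.choose i) : ℂ) • (B^(i+1) * X * B^(n-i))) := by
      rw [adB, Finset.sum_mul, Finset.mul_sum]
      congr 1
      · refine Finset.sum_congr rfl fun i _ => ?_
        rw [smul_mul_assoc, mul_assoc, ← pow_succ]
      · refine Finset.sum_congr rfl fun i _ => ?_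
        rw [mul_smul_comm, ← mul_assoc, ← mul_assoc, ← pow_succ']
    rw [expand]
    have hA' : (∑ i ∈ Finset.range (n+1), ((-1)^i * (n.choose (i+1)) : ℂ) • (B^(i+1) * X * B^(n-i)))
        = X * B^(n+1) - ∑ i ∈ Finset.range (n+1), ((-1)^i * (n.choose i) : ℂ) • (B^i * X * B^(n-i+1)) := by
      rw [Finset.sum_range_succ]
      rw [Finset.sum_range_succ' (fun i => ((-1)^i * (n.choose i) : ℂ) • (B^i * X * B^(n-i+1))) n]
      have hz : ((-1)^n * (n.choose (n+1)) : ℂ) • (B^(n+1) * X * B^(n-n)) = 0 := by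
        simp [Nat.choose_succ_self]
      rw [hz, add_zero]
      have hterm : ∀ i ∈ Finset.range n,
          ((-1)^(i+1) * (n.choose (i+1)) : ℂ) • (B^(i+1) * X * B^(n-(i+1)+1))
          = -(((-1)^i * (n.choose (i+1)) : ℂ) • (B^(i+1) * X * B^(n-i))) := by
        intro i hi
        have h1 : n-(i+1)+1 = n-i := by
          have : i < n := Finset.mem_range.mp hi
          omega
        rw [h1, ← neg_smul]
        congr 1
        ring
      rw [Finset.sum_congr rfl hterm, Finset.sum_neg_distrib]
      simp
    have key : ∑ i ∈ Finset.range (n+2), ((-1)^i * ((n+1).choose i) : ℂ) • (B^i * X * B^(n+1-i))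
        = (∑ i ∈ Finset.range (n+1), ((-1)^i * (n.choose i) : ℂ) • (B^i * X * B^(n-i+1)))
          - (∑ i ∈ Finset.range (n+1), ((-1)^i * (n.choose i) : ℂ) • (B^(i+1) * X * B^(n-i))) := by
      rw [Finset.sum_range_succ' (fun i => ((-1)^i * ((n+1).choose i) : ℂ) • (B^i * X * B^(n+1-i))) (n+1)]
      have hsplit : ∀ i ∈ Finset.range (n+1),
          ((-1)^(i+1) * ((n+1).choose (i+1)) : ℂ) • (B^(i+1) * X * B^(n+1-(i+1)))
          = -(((-1)^i * (n.choose i) : ℂ) • (B^(i+1) * X * B^(n-i)))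
            + -(((-1)^i * (n.choose (i+1)) : ℂ) • (B^(i+1) * X * B^(n-i))) := by
        intro i _
        have h1 : n+1-(i+1) = n-i := by omega
        rw [h1, Nat.choose_succ_succ]
        push_cast
        module
      rw [Finset.sum_congr rfl hsplit, Finset.sum_add_distrib,
        Finset.sum_neg_distrib, Finset.sum_neg_distrib, hA']
      simp
      abel
    rw [key]

end Aux2

namespace Aux2
variable {A : Type*} [NormedRing A] [NormedAlgebra ℂ A] [CompleteSpace A]

lemma coeff_eq {n i : ℕ} (hi : i ≤ n) :
    ((i.factorial : ℂ))⁻¹ * (((n-i).factorial : ℂ))⁻¹ = ((n.factorial : ℂ))⁻¹ * (n.choose i) := by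
  rw [Nat.cast_choose ℂ hi]
  have h1 : (i.factorial : ℂ) ≠ 0 := Nat.cast_ne_zero.mpr i.factorial_ne_zero
  have h2 : (((n-i).factorial : ℂ)) ≠ 0 := Nat.cast_ne_zero.mpr (n-i).factorial_ne_zero
  have h3 : ((n.factorial : ℂ)) ≠ 0 := Nat.cast_ne_zero.mpr n.factorial_ne_zero
  field_simp

lemma conj_exp_eq (B X : A) :
    exp (-B) * X * exp B = ∑' n : ℕ, ((n.factorial : ℂ))⁻¹ • (adB B)^[n] X := by
  have hsummf : Summable fun i : ℕ => ‖((i.factorial : ℂ))⁻¹ • (-B)^i‖ :=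
    norm_expSeries_summable' (-B)
  have hsummg : Summable fun j : ℕ => ‖((j.factorial : ℂ))⁻¹ • (X * B^j)‖ := by
    refine Summable.of_nonneg_of_le (fun _ => norm_nonneg _) (fun j => ?_)
      ((norm_expSeries_summable' (𝕂 := ℂ) B).mul_left ‖X‖)
    rw [norm_smul, norm_smul]
    calc ‖((j.factorial : ℂ))⁻¹‖ * ‖X * B^j‖
        ≤ ‖((j.factorial : ℂ))⁻¹‖ * (‖X‖ * ‖B^j‖) := by
          apply mul_le_mul_of_nonneg_left (norm_mul_le _ _) (norm_nonneg _)
      _ = ‖X‖ * (‖((j.factorial : ℂ))⁻¹‖ * ‖B^j‖) := by ring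
  have hXexp : X * exp B = ∑' j : ℕ, ((j.factorial : ℂ))⁻¹ • (X * B^j) := by
    rw [exp_eq_tsum ℂ]
    rw [← (expSeries_summable' (𝕂 := ℂ) B).tsum_mul_left X]
    congr 1
    funext j
    rw [mul_smul_comm]
  rw [mul_assoc, hXexp, exp_eq_tsum ℂ]
  rw [tsum_mul_tsum_eq_tsum_sum_antidiagonal_of_summable_norm hsummf hsummg]
  congr 1
  funext n
  rw [Finset.Nat.sum_antidiagonal_eq_sum_range_succ_mk]
  rw [ad_pow, Finset.smul_sum]
  refine Finset.sum_congr rfl fun i hi => ?_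
  have hi' : i ≤ n := Nat.lt_succ_iff.mp (Finset.mem_range.mp hi)
  rw [show (-B) = (-1:ℂ) • B from by module, smul_pow, smul_mul_smul_comm]
  simp only []
  rw [smul_mul_assoc, smul_smul, ← mul_assoc]
  have hc := coeff_eq hi'
  match_scalars
  linear_combination ((-1:ℂ))^i * hc

end Aux2

namespace Aux2
variable {A : Type*} [NormedRing A] [NormedAlgebra ℂ A] [CompleteSpace A]

lemma conj_exp_norm_le (B X : A) (C : ℝ) (hC : 0 ≤ C)
    (h : ∀ n : ℕ, ‖(adB B)^[n] X‖ ≤ C * n.factorial * (1/2)^n) :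
    ‖exp (-B) * X * exp B‖ ≤ 2 * C := by
  rw [conj_exp_eq]
  have hb : ∀ n : ℕ, ‖((n.factorial : ℂ))⁻¹ • (adB B)^[n] X‖ ≤ C * (1/2)^n := by
    intro n
    rw [norm_smul, norm_inv, Complex.norm_natCast]
    have hne : (0:ℝ) < (n.factorial : ℝ) := by exact_mod_cast n.factorial_pos
    calc ((n.factorial:ℝ))⁻¹ * ‖(adB B)^[n] X‖
        ≤ ((n.factorial:ℝ))⁻¹ * (C * n.factorial * (1/2)^n) :=
          mul_le_mul_of_nonneg_left (h n) (inv_nonneg.mpr hne.le)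
      _ = C * (1/2)^n := by field_simp
  have hgeom : Summable (fun n : ℕ => C * (1/2:ℝ)^n) :=
    (summable_geometric_of_lt_one (by norm_num) (by norm_num)).mul_left C
  have hsn : Summable (fun n : ℕ => ‖((n.factorial : ℂ))⁻¹ • (adB B)^[n] X‖) :=
    Summable.of_nonneg_of_le (fun _ => norm_nonneg _) hb hgeom
  calc ‖∑' n : ℕ, ((n.factorial : ℂ))⁻¹ • (adB B)^[n] X‖
      ≤ ∑' n : ℕ, ‖((n.factorial : ℂ))⁻¹ • (adB B)^[n] X‖ := norm_tsum_le_tsum_norm hsn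
    _ ≤ ∑' n : ℕ, C * (1/2:ℝ)^n := Summable.tsum_le_tsum hb hsn hgeom
    _ = C * (1 - 1/2)⁻¹ := by
        rw [tsum_mul_left, tsum_geometric_of_lt_one (by norm_num) (by norm_num)]
    _ = 2 * C := by norm_num; ring
end Aux2


namespace Aux3
open NormedSpace

lemma contOn_finite {s : Set ℂ} (hs : s.Finite) (f : ℂ → ℂ) : ContinuousOn f s := by
  haveI : Finite s := hs.to_subtype
  exact continuousOn_iff_continuous_restrict.mpr continuous_of_discreteTopology

lemma spec_finite (L : ℕ) (A : Op L) : (spectrum ℂ A).Finite := by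
  have h2 := AlgEquiv.spectrum_eq ((Matrix.toEuclideanCLM (𝕜 := ℂ) (n := Cfg L)).symm) A
  rw [← h2]
  exact Matrix.finite_spectrum _

lemma contOnSpec (L : ℕ) (A : Op L) (f : ℂ → ℂ) : ContinuousOn f (spectrum ℂ A) :=
  contOn_finite (spec_finite L A) f

lemma cfc_norm_le (L : ℕ) {H : Op L} (hH : IsSelfAdjoint H) (f : ℂ → ℂ) {c : ℝ} (hc : 0 ≤ c)
    (h : ∀ x : ℝ, (x:ℂ) ∈ spectrum ℂ H → ‖f (x:ℂ)‖ ≤ c) : ‖cfc f H‖ ≤ c := by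
  apply norm_cfc_le hc
  intro z hz
  have hre := hH.mem_spectrum_eq_re hz
  rw [hre] at hz ⊢
  exact h z.re hz

lemma exp_smul_eq_cfc (L : ℕ) {H : Op L} (hH : IsSelfAdjoint H) (t : ℝ) :
    exp (((t:ℝ):ℂ) • H) = cfc (fun z : ℂ => Complex.exp ((t:ℂ) * z)) H := by
  have hsa : IsSelfAdjoint (((t:ℝ):ℂ) • H) := by
    rw [isSelfAdjoint_iff, star_smul, Complex.star_def, Complex.conj_ofReal, hH.star_eq]
  rw [← CFC.exp_eq_normedSpace_exp (𝕜 := ℂ) (a := (((t:ℝ):ℂ)) • H) hsa.isStarNormal]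
  rw [← Complex.exp_eq_exp_ℂ]
  rw [← cfc_comp_smul ((t:ℂ)) (Complex.exp) H Complex.continuous_exp.continuousOn
    hH.isStarNormal]
  simp only [smul_eq_mul]

lemma step_bound (L : ℕ) (θ' : ℝ) (hθ' : 1 ≤ θ') (Yl : ℤ → Op L)
    (hY : ∀ i ∈ Finset.Icc (-(L:ℤ)) ((L:ℤ)-1),
      IsSelfAdjoint (Yl i) ∧ IsLocalObs L (Yl i) i (i+1) ∧ ‖Yl i‖ ≤ θ')
    (Z : Op L) (a b : ℤ) (hab : a ≤ b)
    (hZ : MatSupportedOn L (toMat L Z) (Set.Icc a b)) :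
    MatSupportedOn L (toMat L (Z * (∑ i ∈ Finset.Icc (-(L:ℤ)) ((L:ℤ)-1), Yl i)
        - (∑ i ∈ Finset.Icc (-(L:ℤ)) ((L:ℤ)-1), Yl i) * Z)) (Set.Icc (a-1) (b+1)) ∧
    ‖Z * (∑ i ∈ Finset.Icc (-(L:ℤ)) ((L:ℤ)-1), Yl i)
        - (∑ i ∈ Finset.Icc (-(L:ℤ)) ((L:ℤ)-1), Yl i) * Z‖
      ≤ 2*θ'*(((b - a + 2 : ℤ) : ℝ)) * ‖Z‖ := by
  set T := Finset.Icc (-(L:ℤ)) ((L:ℤ)-1) with hT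
  set H := ∑ i ∈ T, Yl i with hH
  have hsplit : Z * H - H * Z = ∑ i ∈ T, (Z * Yl i - Yl i * Z) := by
    rw [hH, Finset.mul_sum, Finset.sum_mul, ← Finset.sum_sub_distrib]
  have hvanish : ∀ i ∈ T, i ∉ Finset.Icc (a-1) b → Z * Yl i - Yl i * Z = 0 := by
    intro i hiT hiW
    have hYs : MatSupportedOn L (toMat L (Yl i)) (Set.Icc i (i+1)) := (hY i hiT).2.1.2.2.2
    have hiW' : i < a - 1 ∨ b < i := by
      simp only [Finset.mem_Icc, not_and, not_le] at hiW
      omega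
    have hdisj : Disjoint (Set.Icc (a:ℤ) b) (Set.Icc i (i+1)) := by
      rw [Set.disjoint_left]
      intro x hx hx'
      simp only [Set.mem_Icc] at hx hx'
      omega
    have hcomm := Aux.matSupp_comm_disjoint hZ hYs hdisj
    have hmm : toMat L (Z * Yl i) = toMat L (Yl i * Z) := by
      show (Matrix.toEuclideanCLM (𝕜 := ℂ) (n := Cfg L)).symm (Z * Yl i)
        = (Matrix.toEuclideanCLM (𝕜 := ℂ) (n := Cfg L)).symm (Yl i * Z)
      rw [map_mul, map_mul]
      exact hcomm
    have hZY : Z * Yl i = Yl i * Z :=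
      (Matrix.toEuclideanCLM (𝕜 := ℂ) (n := Cfg L)).symm.injective hmm
    rw [hZY, sub_self]
  have hsum2 : Z * H - H * Z = ∑ i ∈ T ∩ Finset.Icc (a-1) b, (Z * Yl i - Yl i * Z) := by
    rw [hsplit]
    symm
    apply Finset.sum_subset Finset.inter_subset_left
    intro i hiT hiT'
    apply hvanish i hiT
    intro hiW
    exact hiT' (Finset.mem_inter.mpr ⟨hiT, hiW⟩)
  have hθ0 : (0:ℝ) < θ' := lt_of_lt_of_le one_pos hθ'
  constructor
  · rw [hsum2]
    have hms : toMat L (∑ i ∈ T ∩ Finset.Icc (a-1) b, (Z * Yl i - Yl i * Z))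
        = ∑ i ∈ T ∩ Finset.Icc (a-1) b, toMat L (Z * Yl i - Yl i * Z) := by
      show (Matrix.toEuclideanCLM (𝕜 := ℂ) (n := Cfg L)).symm _ = _
      rw [map_sum]
      rfl
    rw [hms]
    apply Aux.matSupp_sum
    intro i hi
    obtain ⟨hiT, hiW⟩ := Finset.mem_inter.mp hi
    rw [Finset.mem_Icc] at hiW
    have hYs : MatSupportedOn L (toMat L (Yl i)) (Set.Icc i (i+1)) := (hY i hiT).2.1.2.2.2
    have hZ' : MatSupportedOn L (toMat L Z) (Set.Icc (a-1) (b+1)) :=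
      Aux.matSupp_mono (Set.Icc_subset_Icc (by omega) (by omega)) hZ
    have hY' : MatSupportedOn L (toMat L (Yl i)) (Set.Icc (a-1) (b+1)) :=
      Aux.matSupp_mono (Set.Icc_subset_Icc (by omega) (by omega)) hYs
    have hmm1 : toMat L (Z * Yl i - Yl i * Z)
        = toMat L Z * toMat L (Yl i) - toMat L (Yl i) * toMat L Z := by
      show (Matrix.toEuclideanCLM (𝕜 := ℂ) (n := Cfg L)).symm _ = _
      rw [map_sub, map_mul, map_mul]
      rfl
    rw [hmm1]
    exact Aux.matSupp_sub (Aux.matSupp_mul hZ' hY') (Aux.matSupp_mul hY' hZ')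
  · rw [hsum2]
    have hterm : ∀ i ∈ T ∩ Finset.Icc (a-1) b, ‖Z * Yl i - Yl i * Z‖ ≤ 2*θ'*‖Z‖ := by
      intro i hi
      obtain ⟨hiT, _⟩ := Finset.mem_inter.mp hi
      have hYn : ‖Yl i‖ ≤ θ' := (hY i hiT).2.2
      calc ‖Z * Yl i - Yl i * Z‖ ≤ ‖Z * Yl i‖ + ‖Yl i * Z‖ := norm_sub_le _ _
        _ ≤ ‖Z‖ * ‖Yl i‖ + ‖Yl i‖ * ‖Z‖ := add_le_add (norm_mul_le _ _) (norm_mul_le _ _)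
        _ ≤ 2*θ'*‖Z‖ := by nlinarith [norm_nonneg Z, norm_nonneg (Yl i)]
    calc ‖∑ i ∈ T ∩ Finset.Icc (a-1) b, (Z * Yl i - Yl i * Z)‖
        ≤ ∑ i ∈ T ∩ Finset.Icc (a-1) b, ‖Z * Yl i - Yl i * Z‖ := norm_sum_le _ _
      _ ≤ ∑ _i ∈ T ∩ Finset.Icc (a-1) b, 2*θ'*‖Z‖ := Finset.sum_le_sum hterm
      _ = ((T ∩ Finset.Icc (a-1) b).card : ℝ) * (2*θ'*‖Z‖) := by
          rw [Finset.sum_const, nsmul_eq_mul]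
      _ ≤ (((b - a + 2 : ℤ) : ℝ)) * (2*θ'*‖Z‖) := by
          apply mul_le_mul_of_nonneg_right _ (by positivity)
          have hc1 : (T ∩ Finset.Icc (a-1) b).card ≤ (Finset.Icc (a-1) b).card :=
            Finset.card_le_card Finset.inter_subset_right
          have hc2 : (Finset.Icc (a-1) b).card = (b - a + 2).toNat := by
            rw [Int.card_Icc]
            congr 1
            omega
          have hc3 : ((b - a + 2).toNat : ℝ) = ((b - a + 2 : ℤ) : ℝ) := by
            rw [← Int.cast_natCast]
            congr 1
            omega
          rw [← hc3]
          exact_mod_cast le_trans hc1 (le_of_eq hc2)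
      _ = 2*θ'*(((b - a + 2 : ℤ) : ℝ)) * ‖Z‖ := by ring

lemma iter_bound (L : ℕ) (θ' : ℝ) (hθ' : 1 ≤ θ') (Yl : ℤ → Op L)
    (hY : ∀ i ∈ Finset.Icc (-(L:ℤ)) ((L:ℤ)-1),
      IsSelfAdjoint (Yl i) ∧ IsLocalObs L (Yl i) i (i+1) ∧ ‖Yl i‖ ≤ θ')
    (X : Op L) (sX rX : ℤ) (hsr : sX ≤ rX)
    (hX : MatSupportedOn L (toMat L X) (Set.Icc sX rX))
    (τ : ℝ) (hτ : 0 ≤ τ)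
    (hstep : ∀ n : ℕ, τ * (2*θ'*(((rX - sX : ℤ):ℝ) + 2*n + 2)) ≤ (n+1)/2) :
    ∀ n : ℕ,
      MatSupportedOn L
        (toMat L ((Aux2.adB (((τ:ℝ):ℂ) • ∑ i ∈ Finset.Icc (-(L:ℤ)) ((L:ℤ)-1), Yl i))^[n] X))
        (Set.Icc (sX - n) (rX + n)) ∧
      ‖(Aux2.adB (((τ:ℝ):ℂ) • ∑ i ∈ Finset.Icc (-(L:ℤ)) ((L:ℤ)-1), Yl i))^[n] X‖
        ≤ ‖X‖ * n.factorial * (1/2)^n := by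
  set H := ∑ i ∈ Finset.Icc (-(L:ℤ)) ((L:ℤ)-1), Yl i with hHdef
  intro n
  induction n with
  | zero =>
    constructor
    · simpa using hX
    · simp
  | succ n ih =>
    obtain ⟨ih1, ih2⟩ := ih
    set Z := (Aux2.adB (((τ:ℝ):ℂ) • H))^[n] X with hZdef
    have hab : sX - (n:ℤ) ≤ rX + (n:ℤ) := by omega
    obtain ⟨st1, st2⟩ := step_bound L θ' hθ' Yl hY Z (sX - n) (rX + n) hab ih1
    have hadB : Aux2.adB (((τ:ℝ):ℂ) • H) Z = ((τ:ℝ):ℂ) • (Z * H - H * Z) := by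
      rw [Aux2.adB, smul_sub, mul_smul_comm, smul_mul_assoc]
    have hitsucc : (Aux2.adB (((τ:ℝ):ℂ) • H))^[n+1] X = ((τ:ℝ):ℂ) • (Z * H - H * Z) := by
      rw [Function.iterate_succ_apply', ← hZdef, hadB]
    constructor
    · rw [hitsucc]
      have hms : toMat L (((τ:ℝ):ℂ) • (Z * H - H * Z)) = ((τ:ℝ):ℂ) • toMat L (Z * H - H * Z) := by
        show (Matrix.toEuclideanCLM (𝕜 := ℂ) (n := Cfg L)).symm _ = _
        rw [_root_.map_smul]
        rfl
      rw [hms]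
      have heq1 : (sX - ((n+1 : ℕ):ℤ)) = sX - (n:ℤ) - 1 := by push_cast; ring
      have heq2 : (rX + ((n+1 : ℕ):ℤ)) = rX + (n:ℤ) + 1 := by push_cast; ring
      rw [heq1, heq2]
      exact Aux.matSupp_smul _ st1
    · rw [hitsucc]
      have hns : ‖((τ:ℝ):ℂ) • (Z * H - H * Z)‖ = τ * ‖Z * H - H * Z‖ := by
        rw [norm_smul (((τ:ℝ):ℂ)) (Z * H - H * Z), Complex.norm_real, Real.norm_eq_abs, abs_of_nonneg hτ]
      rw [hns]
      have hcast : (((rX + (n:ℤ)) - (sX - (n:ℤ)) + 2 : ℤ) : ℝ) = ((rX - sX : ℤ):ℝ) + 2*n + 2 := by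
        push_cast
        ring
      calc τ * ‖Z * H - H * Z‖
          ≤ τ * (2*θ'*((((rX + (n:ℤ)) - (sX - (n:ℤ)) + 2 : ℤ) : ℝ)) * ‖Z‖) :=
            mul_le_mul_of_nonneg_left st2 hτ
        _ = (τ * (2*θ'*(((rX - sX : ℤ):ℝ) + 2*n + 2))) * ‖Z‖ := by rw [hcast]; ring
        _ ≤ ((n+1)/2) * ‖Z‖ := mul_le_mul_of_nonneg_right (hstep n) (norm_nonneg _)
        _ ≤ ((n+1)/2) * (‖X‖ * n.factorial * (1/2)^n) := by
            apply mul_le_mul_of_nonneg_left ih2 (by positivity)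
        _ = ‖X‖ * (n+1).factorial * (1/2)^(n+1) := by
            rw [Nat.factorial_succ]
            push_cast
            ring

end Aux3

end AuxAll

/-- Lemma A.1: a priori bound on transition probabilities
between Fermi projections for spin chains. -/
theorem fermi_transition_bound
    (θ : ℝ) :
    ∃ mF CF : ℝ, 0 < mF ∧ 0 < CF ∧ ∀ (L : ℕ) (Yl : ℤ → Op L),
      (∀ i ∈ Finset.Icc (-(L:ℤ)) ((L:ℤ)-1),
        IsSelfAdjoint (Yl i) ∧ IsLocalObs L (Yl i) i (i+1) ∧ ‖Yl i‖ ≤ θ) →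
      ∀ (X : Op L) (sX rX : ℤ), IsLocalObs L X sX rX →
      ∀ E E' : ℝ, E < E' →
        ‖specProj L (Set.Iic E) (∑ i ∈ Finset.Icc (-(L:ℤ)) ((L:ℤ)-1), Yl i) * X *
            (1 - specProj L (Set.Iic E') (∑ i ∈ Finset.Icc (-(L:ℤ)) ((L:ℤ)-1), Yl i))‖ ≤
          CF * ‖X‖ * Real.exp (-(mF / ((rX - sX + 1 : ℤ) : ℝ)) * (E' - E)) := by
  classical
  set θ' : ℝ := max θ 1 with hθ'def
  have hθ'1 : 1 ≤ θ' := le_max_right θ 1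
  have hθ'0 : 0 < θ' := lt_of_lt_of_le one_pos hθ'1
  refine ⟨1/(16*θ'), 2, by positivity, by norm_num, ?_⟩
  intro L Yl hY X sX rX hX E E' hEE'
  set H : Op L := ∑ i ∈ Finset.Icc (-(L:ℤ)) ((L:ℤ)-1), Yl i with hHdef
  have hY' : ∀ i ∈ Finset.Icc (-(L:ℤ)) ((L:ℤ)-1),
      IsSelfAdjoint (Yl i) ∧ IsLocalObs L (Yl i) i (i+1) ∧ ‖Yl i‖ ≤ θ' :=
    fun i hi => ⟨(hY i hi).1, (hY i hi).2.1, le_trans (hY i hi).2.2 (le_max_left θ 1)⟩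
  have hH : IsSelfAdjoint H := by
    rw [isSelfAdjoint_iff, hHdef]
    rw [star_sum (Finset.Icc (-(L:ℤ)) ((L:ℤ)-1)) Yl]
    exact Finset.sum_congr rfl fun i hi => (hY' i hi).1.star_eq
  have hsr : sX ≤ rX := hX.2.1
  have hκ0 : (0:ℝ) ≤ ((rX - sX : ℤ) : ℝ) := by
    have : (0:ℤ) ≤ rX - sX := by omega
    exact_mod_cast this
  set κ : ℝ := ((rX - sX : ℤ) : ℝ) with hκdef
  set τ : ℝ := 1/(8*θ'*(κ+2)) with hτdef
  have hden : (0:ℝ) < 8*θ'*(κ+2) := by nlinarith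
  have hτ0 : 0 < τ := by rw [hτdef]; exact div_pos one_pos hden
  have hstep : ∀ n : ℕ, τ * (2*θ'*(κ + 2*n + 2)) ≤ ((n:ℝ)+1)/2 := by
    intro n
    have hn : (0:ℝ) ≤ (n:ℝ) := n.cast_nonneg
    rw [hτdef, div_mul_eq_mul_div, one_mul, div_le_div_iff₀ hden (by norm_num)]
    nlinarith [mul_nonneg (mul_nonneg hθ'0.le hn) hκ0, mul_nonneg hθ'0.le hn,
      mul_nonneg hθ'0.le hκ0]
  set B : Op L := ((τ:ℝ):ℂ) • H with hBdef
  have hiter := Aux3.iter_bound L θ' hθ'1 Yl hY' X sX rX hsr hX.2.2.2 τ hτ0.le hstep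
  have hG : ‖NormedSpace.exp (-B) * X * NormedSpace.exp B‖ ≤ 2 * ‖X‖ :=
    Aux2.conj_exp_norm_le B X ‖X‖ (norm_nonneg X) (fun n => (hiter n).2)
  have hexpB : NormedSpace.exp B = cfc (fun z : ℂ => Complex.exp ((τ:ℂ) * z)) H :=
    Aux3.exp_smul_eq_cfc L hH τ
  have hmB : -B = (((-τ:ℝ)):ℂ) • H := by rw [hBdef]; push_cast; module
  have hexpmB : NormedSpace.exp (-B)
      = cfc (fun z : ℂ => Complex.exp ((((-τ:ℝ)):ℂ) * z)) H := by
    rw [hmB]; exact Aux3.exp_smul_eq_cfc L hH (-τ)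
  have hinv : NormedSpace.exp B * NormedSpace.exp (-B) = 1 := by
    rw [← NormedSpace.exp_add_of_commute_of_mem_ball (𝕂 := ℂ) (Commute.neg_right (Commute.refl B))
      ((NormedSpace.expSeries_radius_eq_top ℂ (Op L)).symm ▸ edist_lt_top _ _)
      ((NormedSpace.expSeries_radius_eq_top ℂ (Op L)).symm ▸ edist_lt_top _ _),
      add_neg_cancel, NormedSpace.exp_zero]
  have collapse : ∀ W : Op L, NormedSpace.exp B * (NormedSpace.exp (-B) * W) = W := by
    intro W; rw [← mul_assoc, hinv, one_mul]
  have decomp : specProj L (Set.Iic E) H * X * (1 - specProj L (Set.Iic E') H)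
      = (specProj L (Set.Iic E) H * NormedSpace.exp B) *
        ((NormedSpace.exp (-B) * X * NormedSpace.exp B) *
          (NormedSpace.exp (-B) * (1 - specProj L (Set.Iic E') H))) := by
    simp only [mul_assoc, collapse]
  have hfE : specProj L (Set.Iic E) H
      = cfc (fun z : ℂ => if z.re ∈ Set.Iic E then (1:ℂ) else 0) H := rfl
  have hfE' : specProj L (Set.Iic E') H
      = cfc (fun z : ℂ => if z.re ∈ Set.Iic E' then (1:ℂ) else 0) H := rfl
  have hPe : ‖specProj L (Set.Iic E) H * NormedSpace.exp B‖ ≤ Real.exp (τ * E) := by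
    rw [hfE, hexpB, ← cfc_mul _ _ H (Aux3.contOnSpec L H _) (Aux3.contOnSpec L H _)]
    apply Aux3.cfc_norm_le L hH _ (Real.exp_nonneg _)
    intro x hx
    by_cases hxE : x ≤ E
    · have hmem : ((x:ℂ)).re ∈ Set.Iic E := by simpa [Complex.ofReal_re] using hxE
      rw [if_pos hmem, one_mul]
      have hc : ((τ:ℂ) * (x:ℂ)) = ((τ * x : ℝ) : ℂ) := by push_cast; ring
      rw [hc, Complex.norm_exp, Complex.ofReal_re]
      exact Real.exp_le_exp.mpr (mul_le_mul_of_nonneg_left hxE hτ0.le)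
    · have hmem : ((x:ℂ)).re ∉ Set.Iic E := by simpa [Complex.ofReal_re] using hxE
      rw [if_neg hmem, zero_mul, norm_zero]
      positivity
  have hQe : ‖NormedSpace.exp (-B) * (1 - specProj L (Set.Iic E') H)‖
      ≤ Real.exp (-(τ * E')) := by
    rw [hexpmB, hfE', show (1 : Op L) = cfc (fun _ : ℂ => (1:ℂ)) H from
        (cfc_const_one ℂ H hH.isStarNormal).symm,
      ← cfc_sub _ _ H (Aux3.contOnSpec L H _) (Aux3.contOnSpec L H _),
      ← cfc_mul _ _ H (Aux3.contOnSpec L H _) (Aux3.contOnSpec L H _)]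
    apply Aux3.cfc_norm_le L hH _ (Real.exp_nonneg _)
    intro x hx
    by_cases hxE : x ≤ E'
    · have hmem : ((x:ℂ)).re ∈ Set.Iic E' := by simpa [Complex.ofReal_re] using hxE
      rw [if_pos hmem, sub_self, mul_zero, norm_zero]
      positivity
    · have hmem : ((x:ℂ)).re ∉ Set.Iic E' := by simpa [Complex.ofReal_re] using hxE
      rw [if_neg hmem, sub_zero, mul_one]
      have hc : ((((-τ:ℝ)):ℂ) * (x:ℂ)) = (((-τ) * x : ℝ) : ℂ) := by push_cast; ring
      rw [hc, Complex.norm_exp, Complex.ofReal_re]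
      apply Real.exp_le_exp.mpr
      push_neg at hxE
      nlinarith [hτ0.le]
  calc ‖specProj L (Set.Iic E) H * X * (1 - specProj L (Set.Iic E') H)‖
      = ‖(specProj L (Set.Iic E) H * NormedSpace.exp B) *
          ((NormedSpace.exp (-B) * X * NormedSpace.exp B) *
            (NormedSpace.exp (-B) * (1 - specProj L (Set.Iic E') H)))‖ := by rw [decomp]
    _ ≤ ‖specProj L (Set.Iic E) H * NormedSpace.exp B‖ *
          (‖NormedSpace.exp (-B) * X * NormedSpace.exp B‖ *
            ‖NormedSpace.exp (-B) * (1 - specProj L (Set.Iic E') H)‖) :=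
        le_trans (norm_mul_le _ _) (mul_le_mul_of_nonneg_left (norm_mul_le _ _) (norm_nonneg _))
    _ ≤ Real.exp (τ*E) * ((2*‖X‖) * Real.exp (-(τ*E'))) := by
        apply mul_le_mul hPe (mul_le_mul hG hQe (norm_nonneg _) (by positivity))
          (by positivity) (Real.exp_nonneg _)
    _ = 2*‖X‖ * Real.exp (τ*E - τ*E') := by
        rw [show τ*E - τ*E' = τ*E + -(τ*E') from by ring, Real.exp_add]; ring
    _ ≤ 2 * ‖X‖ * Real.exp (-(1/(16*θ') / ((rX - sX + 1 : ℤ):ℝ)) * (E' - E)) := by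
        apply mul_le_mul_of_nonneg_left _ (by positivity)
        apply Real.exp_le_exp.mpr
        have hl1 : ((rX - sX + 1 : ℤ):ℝ) = κ + 1 := by rw [hκdef]; push_cast; ring
        have hml : 1/(16*θ') / ((rX - sX + 1 : ℤ):ℝ) ≤ τ := by
          rw [hl1, hτdef, div_div, div_le_div_iff₀ (by nlinarith) hden]
          nlinarith
        have hE : 0 ≤ E' - E := by linarith
        nlinarith [mul_le_mul_of_nonneg_right hml hE]
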